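/- Let λ ∈ ℝ with |λ| > 1, q ∈ ℕ with q ≥ 1, and s > 0. Then Leb₂({(x,y) ∈ ℝ² : x² + y² < s² and λ^{2q}x² + λ^{−2q}y² ≥ s²}) = 2s²·(arcsin(|λ|^q/√(λ^{2q}+1)) − arcsin(1/√(λ^{2q}+1))). (This computes m(A_n^{(q)}) for the Euclidean metric and yields the extremal index ϑ = (2/π)(arcsin(|λ|^q/√(λ^{2q}+1)) − arcsin(1/√(λ^{2q}+1))) = m(A_n^{(q)})/m(U_n) with m(U_n) = πs².) -/

import Mathlib

open MeasureTheory Filter Topology Set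

set_option maxHeartbeats 1000000

open Real Pointwise

noncomputable section

section helpers
variable {L : ℝ}

lemma my_F_deriv {x : ℝ} (h1 : -1 < x) (h2 : x < 1) :
    HasDerivAt (fun x : ℝ => (Real.arcsin x + x * Real.sqrt (1 - x ^ 2)) / 2)
      (Real.sqrt (1 - x ^ 2)) x := by
  have hpos : 0 < 1 - x ^ 2 := by nlinarith
  have hs : Real.sqrt (1 - x ^ 2) ≠ 0 := by positivity
  have h1' : HasDerivAt Real.arcsin (1 / Real.sqrt (1 - x ^ 2)) x :=
    Real.hasDerivAt_arcsin (by linarith) (by linarith)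
  have hinner : HasDerivAt (fun x : ℝ => 1 - x ^ 2) (-(2 * x)) x := by
    simpa using ((hasDerivAt_pow 2 x).const_sub 1)
  have h2' : HasDerivAt (fun x : ℝ => Real.sqrt (1 - x ^ 2))
      (-(2 * x) / (2 * Real.sqrt (1 - x ^ 2))) x := hinner.sqrt hpos.ne'
  have h3 : HasDerivAt (fun x : ℝ => x * Real.sqrt (1 - x ^ 2))
      (1 * Real.sqrt (1 - x ^ 2) + x * (-(2 * x) / (2 * Real.sqrt (1 - x ^ 2)))) x :=
    (hasDerivAt_id x).mul h2'
  have := (h1'.add h3).div_const 2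
  refine this.congr_deriv ?_
  have hsq : Real.sqrt (1 - x ^ 2) * Real.sqrt (1 - x ^ 2) = 1 - x ^ 2 :=
    Real.mul_self_sqrt hpos.le
  field_simp
  ring_nf
  nlinarith [hsq]

lemma my_integral_sqrt {a b : ℝ} (ha : -1 ≤ a) (hab : a ≤ b) (hb : b ≤ 1) :
    ∫ x in a..b, Real.sqrt (1 - x ^ 2) =
      (Real.arcsin b + b * Real.sqrt (1 - b ^ 2)) / 2 -
        (Real.arcsin a + a * Real.sqrt (1 - a ^ 2)) / 2 := by
  have hcont : Continuous fun x : ℝ => (Real.arcsin x + x * Real.sqrt (1 - x ^ 2)) / 2 := by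
    exact ((Real.continuous_arcsin.add (continuous_id.mul
      ((continuous_const.sub (continuous_pow 2)).sqrt))).div_const 2)
  exact intervalIntegral.integral_eq_sub_of_hasDerivAt_of_le hab hcont.continuousOn
    (fun x hx => my_F_deriv (lt_of_le_of_lt ha hx.1) (lt_of_lt_of_le hx.2 hb))
    (Continuous.intervalIntegrable (by fun_prop) a b)

lemma slice_eq (hL : 0 < L) (x : ℝ) :
    {y : ℝ | x ^ 2 + y ^ 2 < 1 ∧ L * x ^ 2 + L⁻¹ * y ^ 2 ≥ 1} =
      Ioo (-(Real.sqrt (1 - x ^ 2))) (Real.sqrt (1 - x ^ 2)) \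
        Ioo (-(Real.sqrt (L * (1 - L * x ^ 2)))) (Real.sqrt (L * (1 - L * x ^ 2))) := by
  have hLi : L * L⁻¹ = 1 := mul_inv_cancel₀ hL.ne'
  ext y
  simp only [mem_setOf_eq, mem_diff, mem_Ioo, ← abs_lt]
  rw [Real.lt_sqrt (abs_nonneg y), Real.lt_sqrt (abs_nonneg y), sq_abs]
  constructor
  · rintro ⟨h1, h2⟩
    refine ⟨by linarith, fun h3 => ?_⟩
    have hLinv : 0 < L⁻¹ := inv_pos.2 hL
    nlinarith
  · rintro ⟨h1, h2⟩
    rw [not_lt] at h2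
    have hLinv : 0 < L⁻¹ := inv_pos.2 hL
    refine ⟨by linarith, ?_⟩
    nlinarith

/-- volume of the slice -/
lemma slice_vol (hL : 0 < L) (x : ℝ) :
    volume ({y : ℝ | x ^ 2 + y ^ 2 < 1 ∧ L * x ^ 2 + L⁻¹ * y ^ 2 ≥ 1}) =
      ENNReal.ofReal
        (max 0 (2 * (Real.sqrt (1 - x ^ 2) - Real.sqrt (L * (1 - L * x ^ 2))))) := by
  rw [slice_eq hL x]
  set b := Real.sqrt (1 - x ^ 2) with hb
  set c := Real.sqrt (L * (1 - L * x ^ 2)) with hc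
  have hb0 : 0 ≤ b := Real.sqrt_nonneg _
  have hc0 : 0 ≤ c := Real.sqrt_nonneg _
  rcases le_or_gt c b with h | h
  · rw [measure_diff (Ioo_subset_Ioo (by linarith) h)
      measurableSet_Ioo.nullMeasurableSet (measure_Ioo_lt_top.ne),
      Real.volume_Ioo, Real.volume_Ioo]
    rw [← ENNReal.ofReal_sub _ (by linarith), max_eq_right (by linarith)]
    ring_nf
  · have : Ioo (-b) b \ Ioo (-c) c = ∅ := by
      rw [diff_eq_empty]
      exact Ioo_subset_Ioo (by linarith) h.le
    rw [this, measure_empty, max_eq_left (by linarith)]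
    simp

end helpers

/-- unit-radius case -/
lemma unit_area {L : ℝ} (hL : 1 < L) :
    volume {p : ℝ × ℝ | p.1 ^ 2 + p.2 ^ 2 < 1 ∧ L * p.1 ^ 2 + L⁻¹ * p.2 ^ 2 ≥ 1} =
      ENNReal.ofReal (2 * (Real.arcsin (Real.sqrt L / Real.sqrt (L + 1)) -
        Real.arcsin (1 / Real.sqrt (L + 1)))) := by
  have hL0 : (0:ℝ) < L := by linarith
  set f : ℝ → ℝ := fun x =>
    max 0 (2 * (Real.sqrt (1 - x ^ 2) - Real.sqrt (L * (1 - L * x ^ 2)))) with hf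
  have hc1 : Continuous fun p : ℝ × ℝ => p.1 ^ 2 + p.2 ^ 2 := by fun_prop
  have hc2 : Continuous fun p : ℝ × ℝ => L * p.1 ^ 2 + L⁻¹ * p.2 ^ 2 := by fun_prop
  have hSm : MeasurableSet {p : ℝ × ℝ | p.1 ^ 2 + p.2 ^ 2 < 1 ∧
      L * p.1 ^ 2 + L⁻¹ * p.2 ^ 2 ≥ 1} :=
    (measurableSet_lt hc1.measurable measurable_const).inter
      (measurableSet_le measurable_const hc2.measurable)
  rw [Measure.volume_eq_prod, Measure.prod_apply hSm]
  have hslice : ∀ x : ℝ, volume (Prod.mk x ⁻¹' {p : ℝ × ℝ | p.1 ^ 2 + p.2 ^ 2 < 1 ∧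
      L * p.1 ^ 2 + L⁻¹ * p.2 ^ 2 ≥ 1}) = ENNReal.ofReal (f x) := by
    intro x
    have : Prod.mk x ⁻¹' {p : ℝ × ℝ | p.1 ^ 2 + p.2 ^ 2 < 1 ∧
        L * p.1 ^ 2 + L⁻¹ * p.2 ^ 2 ≥ 1} =
        {y : ℝ | x ^ 2 + y ^ 2 < 1 ∧ L * x ^ 2 + L⁻¹ * y ^ 2 ≥ 1} := rfl
    rw [this, slice_vol hL0 x]
  simp only [hslice]
  -- continuity and support of f
  have hfc : Continuous f := by
    apply continuous_const.max
    exact continuous_const.mul (((continuous_const.sub (continuous_pow 2)).sqrt).sub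
      ((continuous_const.mul (continuous_const.sub
        (continuous_const.mul (continuous_pow 2)))).sqrt))
  have hsupp : ∀ x : ℝ, x ∉ Icc (-1 : ℝ) 1 → f x = 0 := by
    intro x hx
    simp only [mem_Icc, not_and_or, not_le] at hx
    have hx2 : 1 - x ^ 2 ≤ 0 := by rcases hx with h | h <;> nlinarith
    have h0 : Real.sqrt (1 - x ^ 2) = 0 := Real.sqrt_eq_zero'.2 hx2
    simp only [hf, h0]
    exact max_eq_left (by nlinarith [Real.sqrt_nonneg (L * (1 - L * x ^ 2))])
  have hcs : HasCompactSupport f := by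
    apply HasCompactSupport.intro isCompact_Icc hsupp
  have hfi : Integrable f := hfc.integrable_of_hasCompactSupport hcs
  have hfnn : ∀ x, 0 ≤ f x := fun x => le_max_left _ _
  rw [← ofReal_integral_eq_lintegral_ofReal hfi (ae_of_all _ hfnn)]
  congr 1
  -- now compute the real integral
  have hsupp' : Function.support f ⊆ Icc (-1 : ℝ) 1 := by
    intro x hx
    by_contra h
    exact hx (hsupp x h)
  rw [← MeasureTheory.setIntegral_eq_integral_of_forall_compl_eq_zero
    (fun x hx => hsupp x hx)]
  rw [MeasureTheory.integral_Icc_eq_integral_Ioc, ← intervalIntegral.integral_of_le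
    (by norm_num : (-1:ℝ) ≤ 1)]
  -- symmetry
  have hint : ∀ a b : ℝ, IntervalIntegrable f volume a b := fun a b =>
    hfi.intervalIntegrable
  have heven : ∀ x, f (-x) = f x := by
    intro x; simp [hf]
  have hsplit : ∫ x in (-1:ℝ)..1, f x = (∫ x in (-1:ℝ)..0, f x) + ∫ x in (0:ℝ)..1, f x :=
    (intervalIntegral.integral_add_adjacent_intervals (hint _ _) (hint _ _)).symm
  have hneg : ∫ x in (-1:ℝ)..0, f x = ∫ x in (0:ℝ)..1, f x := by
    have := intervalIntegral.integral_comp_neg f (a := -1) (b := 0)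
    simp only [neg_zero, neg_neg] at this
    rw [← this]
    exact intervalIntegral.integral_congr (fun x _ => (heven x).symm)
  rw [hsplit, hneg, ← two_mul]
  -- key quantities
  set x₀ : ℝ := 1 / Real.sqrt (L + 1) with hx₀
  set t₁ : ℝ := (Real.sqrt L)⁻¹ with ht₁
  set A : ℝ := Real.sqrt L / Real.sqrt (L + 1) with hA
  have hsL : 0 < Real.sqrt L := Real.sqrt_pos.2 hL0
  have hsL1 : 0 < Real.sqrt (L + 1) := Real.sqrt_pos.2 (by linarith)
  have hsLsq : Real.sqrt L ^ 2 = L := Real.sq_sqrt hL0.le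
  have hsL1sq : Real.sqrt (L + 1) ^ 2 = L + 1 := Real.sq_sqrt (by linarith)
  have hsLge1 : 1 ≤ Real.sqrt L := by
    rw [show (1:ℝ) = Real.sqrt 1 from (Real.sqrt_one).symm]
    exact Real.sqrt_le_sqrt hL.le
  have hsLlt : Real.sqrt L ≤ Real.sqrt (L + 1) := Real.sqrt_le_sqrt (by linarith)
  have hx₀0 : 0 < x₀ := by positivity
  have hx₀t₁ : x₀ ≤ t₁ := by
    rw [hx₀, ht₁, one_div]
    exact inv_anti₀ hsL hsLlt
  have ht₁1 : t₁ ≤ 1 := by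
    rw [ht₁]
    exact inv_le_one_of_one_le₀ hsLge1
  have hx₀sq : x₀ ^ 2 = (L + 1)⁻¹ := by
    rw [hx₀]; rw [div_pow, one_pow, hsL1sq]; rw [one_div]
  have hAsq : A ^ 2 = L / (L + 1) := by
    rw [hA, div_pow, hsLsq, hsL1sq]
  have hA1 : A ≤ 1 := by
    rw [hA, div_le_one hsL1]; exact hsLlt
  have hA0 : 0 ≤ A := by positivity
  -- piece 1 : on [0, x₀], f = 0
  have hp1 : ∫ x in (0:ℝ)..x₀, f x = 0 := by
    have heq : EqOn f (fun _ => (0:ℝ)) (uIcc 0 x₀) := by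
      intro x hx
      rw [uIcc_of_le hx₀0.le] at hx
      have hxx : x ^ 2 ≤ (L + 1)⁻¹ := by
        rw [← hx₀sq]
        exact sq_le_sq' (by linarith [hx.1, hx₀0] : -x₀ ≤ x) hx.2
      have hkey : 1 - x ^ 2 ≤ L * (1 - L * x ^ 2) := by
        have hmul : x ^ 2 * (L + 1) ≤ 1 := by
          have h' := mul_le_mul_of_nonneg_right hxx (by linarith : (0:ℝ) ≤ L + 1)
          rwa [inv_mul_cancel₀ (by linarith : (L+1:ℝ) ≠ 0)] at h'
        nlinarith
      have hsq : Real.sqrt (1 - x ^ 2) ≤ Real.sqrt (L * (1 - L * x ^ 2)) :=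
        Real.sqrt_le_sqrt hkey
      simp only [hf]
      exact max_eq_left (by linarith)
    rw [intervalIntegral.integral_congr heq]
    simp
  -- piece 2 : on [x₀, t₁]
  have hsqA : Real.sqrt (1 - A ^ 2) = x₀ := by
    have h1A : 1 - A ^ 2 = x₀ ^ 2 := by
      rw [hAsq, hx₀sq]; field_simp; ring
    rw [h1A, Real.sqrt_sq hx₀0.le]
  have hsqx₀ : Real.sqrt (1 - x₀ ^ 2) = A := by
    have h1x : 1 - x₀ ^ 2 = A ^ 2 := by
      rw [hAsq, hx₀sq]; field_simp; ring
    rw [h1x, Real.sqrt_sq hA0]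
  have hp2 : ∫ x in x₀..t₁, f x =
      2 * (((Real.arcsin t₁ + t₁ * Real.sqrt (1 - t₁ ^ 2)) / 2 -
          (Real.arcsin x₀ + x₀ * A) / 2) -
        ((Real.arcsin 1 + 1 * Real.sqrt (1 - 1 ^ 2)) / 2 -
          (Real.arcsin A + A * x₀) / 2)) := by
    have heq : EqOn f (fun x => 2 * (Real.sqrt (1 - x ^ 2) -
        Real.sqrt L * Real.sqrt (1 - L * x ^ 2))) (uIcc x₀ t₁) := by
      intro x hx
      rw [uIcc_of_le hx₀t₁] at hx
      have hxge : x₀ ^ 2 ≤ x ^ 2 := sq_le_sq' (by linarith [hx.1, hx₀0] : -x ≤ x₀) hx.1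
      have h1 : 1 ≤ x ^ 2 * (L + 1) := by
        rw [hx₀sq] at hxge
        calc (1:ℝ) = (L+1)⁻¹ * (L+1) := by field_simp
        _ ≤ x ^ 2 * (L + 1) := mul_le_mul_of_nonneg_right hxge (by linarith)
      have hkey : L * (1 - L * x ^ 2) ≤ 1 - x ^ 2 := by nlinarith
      have hsq : Real.sqrt (L * (1 - L * x ^ 2)) ≤ Real.sqrt (1 - x ^ 2) :=
        Real.sqrt_le_sqrt hkey
      simp only [hf]
      rw [max_eq_right (by linarith), Real.sqrt_mul hL0.le]
    rw [intervalIntegral.integral_congr heq]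
    have hi1 : IntervalIntegrable (fun x : ℝ => Real.sqrt (1 - x ^ 2)) volume x₀ t₁ :=
      Continuous.intervalIntegrable (by fun_prop) _ _
    have hi2 : IntervalIntegrable (fun x : ℝ => Real.sqrt L * Real.sqrt (1 - L * x ^ 2))
        volume x₀ t₁ := Continuous.intervalIntegrable (by fun_prop) _ _
    rw [intervalIntegral.integral_const_mul, intervalIntegral.integral_sub hi1 hi2,
      intervalIntegral.integral_const_mul]
    have hsub : ∫ x in x₀..t₁, Real.sqrt (1 - L * x ^ 2) =
        (Real.sqrt L)⁻¹ * ((Real.arcsin 1 + 1 * Real.sqrt (1 - 1 ^ 2)) / 2 -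
          (Real.arcsin A + A * x₀) / 2) := by
      have hrw : (fun x : ℝ => Real.sqrt (1 - L * x ^ 2)) =
          fun x : ℝ => Real.sqrt (1 - (Real.sqrt L * x) ^ 2) := by
        funext x
        rw [mul_pow, hsLsq]
      rw [hrw, intervalIntegral.integral_comp_mul_left
        (fun u => Real.sqrt (1 - u ^ 2)) hsL.ne']
      have e1 : Real.sqrt L * t₁ = 1 := mul_inv_cancel₀ hsL.ne'
      have e2 : Real.sqrt L * x₀ = A := by rw [hx₀, hA]; ring
      rw [e1, e2, smul_eq_mul, my_integral_sqrt (by linarith) hA1 le_rfl, hsqA]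
    rw [hsub, my_integral_sqrt (by linarith [hx₀0]) hx₀t₁ ht₁1, hsqx₀]
    field_simp
  -- piece 3 : on [t₁, 1]
  have hp3 : ∫ x in t₁..1, f x =
      2 * ((Real.arcsin 1 + 1 * Real.sqrt (1 - 1 ^ 2)) / 2 -
        (Real.arcsin t₁ + t₁ * Real.sqrt (1 - t₁ ^ 2)) / 2) := by
    have heq : EqOn f (fun x => 2 * Real.sqrt (1 - x ^ 2)) (uIcc t₁ 1) := by
      intro x hx
      rw [uIcc_of_le ht₁1] at hx
      have ht₁pos : 0 < t₁ := by positivity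
      have hxge : t₁ ^ 2 ≤ x ^ 2 := sq_le_sq' (by linarith [hx.1, ht₁pos] : -x ≤ t₁) hx.1
      have ht₁sq : t₁ ^ 2 = L⁻¹ := by rw [ht₁, inv_pow, hsLsq]
      have h1 : 1 ≤ L * x ^ 2 := by
        rw [ht₁sq] at hxge
        calc (1:ℝ) = L * L⁻¹ := (mul_inv_cancel₀ hL0.ne').symm
        _ ≤ L * x ^ 2 := mul_le_mul_of_nonneg_left hxge hL0.le
      have hc0 : Real.sqrt (L * (1 - L * x ^ 2)) = 0 :=
        Real.sqrt_eq_zero'.2 (by nlinarith)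
      simp only [hf, hc0, sub_zero]
      rw [max_eq_right (by positivity)]
    rw [intervalIntegral.integral_congr heq, intervalIntegral.integral_const_mul,
      my_integral_sqrt (by linarith [hx₀0, hx₀t₁]) ht₁1 le_rfl]
  -- assemble
  have hsplit2 : ∫ x in (0:ℝ)..1, f x =
      ((∫ x in (0:ℝ)..x₀, f x) + ∫ x in x₀..t₁, f x) + ∫ x in t₁..1, f x := by
    rw [intervalIntegral.integral_add_adjacent_intervals (hint _ _) (hint _ _),
      intervalIntegral.integral_add_adjacent_intervals (hint _ _) (hint _ _)]
  rw [hsplit2, hp1, hp2, hp3]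
  ring

/-- the planar Lebesgue measure of the open disk of radius `s`
minus the interior of the ellipse `λ^{2q}x² + λ^{-2q}y² < s²` equals
`2s²(arcsin(|λ|^q/√(λ^{2q}+1)) − arcsin(1/√(λ^{2q}+1)))`; this computes
`m(A_n^{(q)})` and the extremal index for the Euclidean metric. -/
theorem measure_Aq_euclidean
    (lam : ℝ) (hlam : 1 < |lam|) (q : ℕ) (hq : 1 ≤ q) (s : ℝ) (hs : 0 < s) :
    volume {p : ℝ × ℝ | p.1 ^ 2 + p.2 ^ 2 < s ^ 2 ∧
        lam ^ (2 * q) * p.1 ^ 2 + (lam ^ (2 * q))⁻¹ * p.2 ^ 2 ≥ s ^ 2} =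
      ENNReal.ofReal (2 * s ^ 2 *
        (Real.arcsin (|lam| ^ q / Real.sqrt (lam ^ (2 * q) + 1)) -
          Real.arcsin (1 / Real.sqrt (lam ^ (2 * q) + 1)))) := by
  set L : ℝ := lam ^ (2 * q) with hLdef
  have hLeq : (|lam| ^ q) ^ 2 = L := by
    rw [hLdef, ← pow_mul, mul_comm q 2, ← abs_pow, abs_of_nonneg]
    rw [pow_mul]
    exact pow_nonneg (sq_nonneg lam) q
  have habs1 : 1 < |lam| ^ q := one_lt_pow₀ hlam (by omega)
  have hL1 : 1 < L := by nlinarith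
  have hL0 : (0:ℝ) < L := by linarith
  have hsqL : Real.sqrt L = |lam| ^ q := by
    rw [← hLeq, Real.sqrt_sq (by positivity)]
  have hs2 : (0:ℝ) < s ^ 2 := by positivity
  have hsi : s ^ 2 * (s⁻¹) ^ 2 = 1 := by
    rw [← mul_pow, mul_inv_cancel₀ hs.ne', one_pow]
  have hset : {p : ℝ × ℝ | p.1 ^ 2 + p.2 ^ 2 < s ^ 2 ∧
      L * p.1 ^ 2 + L⁻¹ * p.2 ^ 2 ≥ s ^ 2} =
      s • {p : ℝ × ℝ | p.1 ^ 2 + p.2 ^ 2 < 1 ∧ L * p.1 ^ 2 + L⁻¹ * p.2 ^ 2 ≥ 1} := by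
    ext p
    rw [Set.mem_smul_set_iff_inv_smul_mem₀ hs.ne']
    simp only [mem_setOf_eq, Prod.smul_fst, Prod.smul_snd, smul_eq_mul, ge_iff_le]
    have e1 : (s⁻¹ * p.1) ^ 2 = (s⁻¹) ^ 2 * p.1 ^ 2 := by ring
    have e2 : (s⁻¹ * p.2) ^ 2 = (s⁻¹) ^ 2 * p.2 ^ 2 := by ring
    rw [e1, e2]
    have hsi2 : (0:ℝ) < (s⁻¹) ^ 2 := by positivity
    constructor
    · rintro ⟨h1, h2⟩
      constructor
      · nlinarith
      · nlinarith [mul_le_mul_of_nonneg_left h2 hsi2.le]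
    · rintro ⟨h1, h2⟩
      constructor
      · nlinarith [mul_lt_mul_of_pos_left h1 hs2]
      · nlinarith [mul_le_mul_of_nonneg_left h2 hs2.le]
  rw [hset, Measure.addHaar_smul, unit_area hL1, hsqL]
  have hrank : Module.finrank ℝ (ℝ × ℝ) = 2 := by
    simp [Module.finrank_prod]
  rw [hrank]
  rw [← ENNReal.ofReal_mul (by positivity : (0:ℝ) ≤ |s ^ 2|)]
  congr 1
  rw [abs_of_nonneg hs2.le]
  ring
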